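/- arXiv:2012.04093 — 2 statements merged into one kernel-verified Lean document; each statement's English description precedes it below -/
import Mathlib

section
/- For every n : ℕ, every a in the level-(n+1) set Set.range (E^[n+1]), and every k : ℕ, iterating the map c ↦ Fmul n a c k times starting from the multiplicative identity E^[n] 1 yields Fmul (n+1) a (E^[n+1] k); that is, (fun c => Fmul n a c)^[k] (E^[n] 1) = Fmul (n+1) a (E^[n+1] k). (This encodes the paper's Proposition that a [n:3] b = a [n+1:2] E(b), i.e. level-n exponentiation of a by E^[n] k equals level-(n+1) multiplication of a by E^[n+1] k.) -/
/-- The exponential function `E a = w ^ a` on ℕ, for a fixed base `w`. -/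
def E (w : ℕ) (a : ℕ) : ℕ := w ^ a

/-- Bennett's commutative hyperoperation `F_n` (level-`n` addition):
`Fadd w n a b = E^[n] (L^[n] a + L^[n] b)` where `L = Nat.log w`. -/
def Fadd (w : ℕ) (n : ℕ) (a b : ℕ) : ℕ :=
  (E w)^[n] ((Nat.log w)^[n] a + (Nat.log w)^[n] b)

/-- Bennett's commutative hyperoperation `F_{n+1}` (level-`n` multiplication):
`Fmul w n a b = E^[n] (L^[n] a * L^[n] b)` where `L = Nat.log w`. -/
def Fmul (w : ℕ) (n : ℕ) (a b : ℕ) : ℕ :=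
  (E w)^[n] ((Nat.log w)^[n] a * (Nat.log w)^[n] b)

lemma logIter_EIter (w : ℕ) (hw : 2 ≤ w) (n x : ℕ) :
    (Nat.log w)^[n] ((E w)^[n] x) = x := by
  induction n generalizing x with
  | zero => simp
  | succ n ih =>
    rw [Function.iterate_succ_apply (E w), Function.iterate_succ_apply' (Nat.log w),
      ih, E, Nat.log_pow hw]

/-- For `a` in the level-`(n+1)` set, iterating `c ↦ Fmul n a c` `k` times from the
multiplicative identity `E^[n] 1` yields `Fmul (n+1) a (E^[n+1] k)`. -/
theorem Fmul_iterate_eq_Fmul_succ (w : ℕ) (hw : 2 ≤ w) (n : ℕ) :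
    ∀ a ∈ Set.range ((E w)^[n+1]), ∀ k : ℕ,
      (fun c => Fmul w n a c)^[k] ((E w)^[n] 1) = Fmul w (n+1) a ((E w)^[n+1] k) := by
  rintro a ⟨m, rfl⟩ k
  rw [show (E w)^[n+1] m = (E w)^[n] (w ^ m) from Function.iterate_succ_apply (E w) n m]
  have key : (fun c => Fmul w n ((E w)^[n] (w ^ m)) c)^[k] ((E w)^[n] 1)
      = (E w)^[n] ((w ^ m) ^ k) := by
    induction k with
    | zero => simp
    | succ k ih =>
      rw [Function.iterate_succ_apply', ih, Fmul,
        logIter_EIter w hw, logIter_EIter w hw, pow_succ, mul_comm]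
  rw [key, Fmul]
  rw [show (E w)^[n] (w ^ m) = (E w)^[n+1] m from (Function.iterate_succ_apply (E w) n m).symm,
    logIter_EIter w hw (n+1), logIter_EIter w hw (n+1)]
  simp [E, pow_mul]
end

section
/- The Grothendieck-type ring built on the level-n set has no nonzero zero divisors: for every n : ℕ and all x, y, u, v ∈ Set.range (E^[n]), if Fadd n (Fmul n x u) (Fmul n y v) = Fadd n (Fmul n y u) (Fmul n x v) (i.e. the product of the difference-classes represented by (x,y) and (u,v) is the zero class), then x = y or u = v (i.e. one of the two factor classes is the zero class). (This is the key step in the paper's Theorem that (ℤ_{n,□}, ⊕_{n,□}, ⊗_{n,□}) is an integral domain.) -/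
lemma logE (w : ℕ) (hw : 2 ≤ w) (n a : ℕ) :
    (Nat.log w)^[n] ((E w)^[n] a) = a := by
  induction n generalizing a with
  | zero => rfl
  | succ n ih =>
    rw [Function.iterate_succ_apply, Function.iterate_succ_apply',
      show E w ((E w)^[n] a) = w ^ ((E w)^[n] a) from rfl,
      Nat.log_pow (by omega : 1 < w), ih]

lemma Einj (w : ℕ) (hw : 2 ≤ w) (n : ℕ) : Function.Injective ((E w)^[n]) :=
  Function.Injective.iterate (Nat.pow_right_injective hw) n

/-- The Grothendieck-type ring built on the level-`n` set has no nonzero zero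
divisors: if the product of the difference-classes of `(x,y)` and `(u,v)` is the
zero class, then one of the factors is the zero class. -/
theorem no_zero_divisors (w : ℕ) (hw : 2 ≤ w) (n : ℕ) :
    ∀ x ∈ Set.range ((E w)^[n]), ∀ y ∈ Set.range ((E w)^[n]),
    ∀ u ∈ Set.range ((E w)^[n]), ∀ v ∈ Set.range ((E w)^[n]),
      Fadd w n (Fmul w n x u) (Fmul w n y v) =
        Fadd w n (Fmul w n y u) (Fmul w n x v) →
      x = y ∨ u = v := by
  rintro x ⟨a, rfl⟩ y ⟨b, rfl⟩ u ⟨c, rfl⟩ v ⟨d, rfl⟩ h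
  simp only [Fadd, Fmul, logE w hw] at h
  have h' := Einj w hw n h
  have : (a : ℤ) * c + b * d = b * c + a * d := by exact_mod_cast h'
  have : ((a : ℤ) - b) * ((c : ℤ) - d) = 0 := by ring_nf; linarith
  rcases mul_eq_zero.mp this with h0 | h0
  · left; congr 1; omega
  · right; congr 1; omega
end
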